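/- Let s : ℝ³ → ℝ^M be a differentiable map with partial derivatives ∂s/∂c = s/c, ∂s/∂t = (s − c𝟙)/(t−u), ∂s/∂u = −((1/c)s⊙s − s)/(t−u) at a point where c > 0, t ≠ u, and s has strictly positive entries. Define J(c,t,u) = (sᵀ𝟙)/‖s‖. Then ∂J/∂c = 0, ∂J/∂t = −c·K₁(s)/((t−u)‖s‖³), and ∂J/∂u = K₂(s)/(c(t−u)‖s‖³), where K₁(s) = ‖s‖²‖𝟙‖² − (sᵀ𝟙)² and K₂(s) = (sᵀ(s⊙s))(sᵀ𝟙) − ‖s‖⁴. -/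

import Mathlib

lemma stmt19_key {M : ℕ} (g : ℝ → Fin M → ℝ) (v : Fin M → ℝ) (x : ℝ)
    (hg : HasDerivAt g v x) (hQ : 0 < ∑ i, g x i ^ 2) :
    HasDerivAt (fun y => (∑ i, g y i) / Real.sqrt (∑ i, g y i ^ 2))
      (((∑ i, v i) * (∑ i, g x i ^ 2) - (∑ i, g x i) * (∑ i, g x i * v i)) /
        Real.sqrt (∑ i, g x i ^ 2) ^ 3) x := by
  have hcomp : ∀ i, HasDerivAt (fun y => g y i) (v i) x := fun i => hasDerivAt_pi.mp hg i
  have hN : HasDerivAt (fun y => ∑ i, g y i) (∑ i, v i) x :=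
    HasDerivAt.fun_sum (fun i _ => hcomp i)
  have hQd : HasDerivAt (fun y => ∑ i, g y i ^ 2) (∑ i, 2 * (g x i * v i)) x := by
    refine HasDerivAt.fun_sum (fun i _ => ?_)
    simpa [mul_comm, mul_assoc, mul_left_comm] using (hcomp i).fun_pow 2
  have hR : HasDerivAt (fun y => Real.sqrt (∑ i, g y i ^ 2))
      ((1 / (2 * Real.sqrt (∑ i, g x i ^ 2))) * (∑ i, 2 * (g x i * v i))) x :=
    (Real.hasDerivAt_sqrt hQ.ne').comp x hQd
  have hRpos : 0 < Real.sqrt (∑ i, g x i ^ 2) := Real.sqrt_pos.mpr hQ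
  have h2 : Real.sqrt (∑ i, g x i ^ 2) ^ 2 = ∑ i, g x i ^ 2 := Real.sq_sqrt hQ.le
  have eS : (∑ i, 2 * (g x i * v i)) = 2 * ∑ i, g x i * v i := (Finset.mul_sum _ _ _).symm
  have := hN.fun_div hR hRpos.ne'
  refine this.congr_deriv (Eq.symm ?_)
  rw [eS]
  have hRne : Real.sqrt (∑ i, g x i ^ 2) ≠ 0 := hRpos.ne'
  field_simp
  linear_combination (-(∑ i, v i)) * h2

/-- partial derivatives of J(c,t,u) = (sᵀ𝟙)/‖s‖ via the chain rule. -/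
theorem stmt19 {M : ℕ} (s : ℝ → ℝ → ℝ → (Fin M → ℝ)) (c t u : ℝ)
    (hc : 0 < c) (htu : t ≠ u) (hpos : ∀ i, 0 < s c t u i)
    (hdc : HasDerivAt (fun c' => s c' t u) ((1 / c) • s c t u) c)
    (hdt : HasDerivAt (fun t' => s c t' u)
      ((1 / (t - u)) • (s c t u - fun _ => c)) t)
    (hdu : HasDerivAt (fun u' => s c t u')
      (-(1 / (t - u)) • ((1 / c) • (s c t u * s c t u) - s c t u)) u) :
    HasDerivAt (fun c' => (∑ i, s c' t u i) / Real.sqrt (∑ i, s c' t u i ^ 2)) 0 c ∧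
    HasDerivAt (fun t' => (∑ i, s c t' u i) / Real.sqrt (∑ i, s c t' u i ^ 2))
      (-(c * ((∑ i, s c t u i ^ 2) * (M : ℝ) - (∑ i, s c t u i) ^ 2)) /
        ((t - u) * Real.sqrt (∑ i, s c t u i ^ 2) ^ 3)) t ∧
    HasDerivAt (fun u' => (∑ i, s c t u' i) / Real.sqrt (∑ i, s c t u' i ^ 2))
      (((∑ i, s c t u i ^ 3) * (∑ i, s c t u i) - (∑ i, s c t u i ^ 2) ^ 2) /
        (c * (t - u) * Real.sqrt (∑ i, s c t u i ^ 2) ^ 3)) u := by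
  rcases Nat.eq_zero_or_pos M with hM | hM
  · subst hM
    simp only [Finset.univ_eq_empty, Finset.sum_empty, Nat.cast_zero]
    refine ⟨?_, ?_, ?_⟩ <;> simpa using hasDerivAt_const _ (0 / Real.sqrt 0 : ℝ)
  · have : Nonempty (Fin M) := ⟨⟨0, hM⟩⟩
    have hQ : 0 < ∑ i, s c t u i ^ 2 :=
      Finset.sum_pos (fun i _ => pow_pos (hpos i) 2) Finset.univ_nonempty
    have hR : 0 < Real.sqrt (∑ i, s c t u i ^ 2) := Real.sqrt_pos.mpr hQ
    have hsub : t - u ≠ 0 := sub_ne_zero.mpr htu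
    refine ⟨?_, ?_, ?_⟩
    · have h := stmt19_key (fun c' => s c' t u) ((1 / c) • s c t u) c hdc hQ
      convert h using 1
      have w1 : ∀ i, ((1 / c) • s c t u : Fin M → ℝ) i = (1 / c) * s c t u i := fun i => by
        simp [Pi.smul_apply]
      have w2 : ∀ i, s c t u i * ((1 / c) • s c t u : Fin M → ℝ) i
          = (1 / c) * s c t u i ^ 2 := fun i => by simp [Pi.smul_apply]; ring
      simp only [w2]
      simp only [w1]
      simp only [← Finset.mul_sum]
      ring
    · have h := stmt19_key (fun t' => s c t' u) ((1 / (t - u)) • (s c t u - fun _ => c)) t hdt hQ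
      convert h using 1
      have w1 : ∀ i, ((1 / (t - u)) • (s c t u - fun _ => c) : Fin M → ℝ) i
          = (1 / (t - u)) * s c t u i - (1 / (t - u)) * c := fun i => by
        simp [Pi.smul_apply]; ring
      have w2 : ∀ i, s c t u i * ((1 / (t - u)) • (s c t u - fun _ => c) : Fin M → ℝ) i
          = (1 / (t - u)) * s c t u i ^ 2 - ((1 / (t - u)) * c) * s c t u i := fun i => by
        simp [Pi.smul_apply]; ring
      simp only [w2]
      simp only [w1]
      simp only [Finset.sum_sub_distrib, ← Finset.mul_sum, Finset.sum_const,
        Finset.card_univ, Fintype.card_fin, nsmul_eq_mul]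
      field_simp
      ring
    · have h := stmt19_key (fun u' => s c t u')
        (-(1 / (t - u)) • ((1 / c) • (s c t u * s c t u) - s c t u)) u hdu hQ
      convert h using 1
      have w1 : ∀ i, (-(1 / (t - u)) • ((1 / c) • (s c t u * s c t u) - s c t u) : Fin M → ℝ) i
          = (1 / (t - u)) * s c t u i - ((1 / (t - u)) * (1 / c)) * s c t u i ^ 2 := fun i => by
        simp [Pi.smul_apply]; ring
      have w2 : ∀ i, s c t u i *
            (-(1 / (t - u)) • ((1 / c) • (s c t u * s c t u) - s c t u) : Fin M → ℝ) i
          = (1 / (t - u)) * s c t u i ^ 2 - ((1 / (t - u)) * (1 / c)) * s c t u i ^ 3 :=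
        fun i => by simp [Pi.smul_apply]; ring
      simp only [w2]
      simp only [w1]
      simp only [Finset.sum_sub_distrib, ← Finset.mul_sum]
      field_simp
      ring
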